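/- Let C ≥ 1, let q = (q_1, …, q_C, q_cs) be a probability vector on C+1 categories with q_cs < 1, and let n ≥ 1. For a count vector m = (m_1, …, m_C, m_cs) of nonnegative integers summing to n, define the plug-in ambiguity estimator = 1 − (𝟙[m_cs < n]/(n(n − m_cs)))·Σ_{k=1}^C m_k². Then the expectation of over count vectors distributed multinomially with parameters (n, q), i.e. Σ over all such m of (n!/(m_1!⋯m_C!·m_cs!))·q_cs^{m_cs}·∏_{k=1}^C q_k^{m_k} times Â(m), equals (1 − (1 − q_cs^n)/n) − [1/(1−q_cs) − (1 − q_cs^n)/(n(1−q_cs)²)]·Σ_{k=1}^C q_k². -/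

import Mathlib

open Finset

/-- The plug-in ambiguity estimator for a count vector `m = (m₁, …, m_C, m_cs)`
(indexed over `Fin (C+1)`, with the last index the can't-solve category) based on
`n` responses: `1 - (𝟙[m_cs < n]/(n(n - m_cs)))·∑ m_k²`. -/
noncomputable def plugInAmb (C : ℕ) (n : ℕ) (m : Fin (C + 1) → ℕ) : ℝ :=
  1 - ((if m (Fin.last C) < n then (1 : ℝ) else 0) /
        ((n : ℝ) * ((n : ℝ) - (m (Fin.last C) : ℝ)))) *
      ∑ k : Fin C, ((m k.castSucc : ℝ)) ^ 2

/-- The multinomial probability mass function of the count vector `m` for `n`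
responses with category probabilities `Q`. -/
noncomputable def multinomialPMF (C : ℕ) (n : ℕ) (Q : Fin (C + 1) → ℝ)
    (m : Fin (C + 1) → ℕ) : ℝ :=
  ((n.factorial : ℝ) / ∏ i, ((m i).factorial : ℝ)) * ∏ i, Q i ^ m i

lemma prodFac_ne (c : ℕ) (m : Fin c → ℕ) : (∏ i, ((m i).factorial : ℝ)) ≠ 0 :=
  Finset.prod_ne_zero_iff.2 fun i _ => Nat.cast_ne_zero.2 (Nat.factorial_ne_zero _)

lemma sumW (c : ℕ) (q : Fin c → ℝ) (N : ℕ) :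
    ∑ m ∈ Finset.Nat.antidiagonalTuple c N,
      ((N.factorial : ℝ) / ∏ i, ((m i).factorial : ℝ)) * ∏ i, q i ^ m i
      = (∑ i, q i) ^ N := by
  rw [← Finset.piAntidiag_univ_fin_eq_antidiagonalTuple N c,
    Finset.sum_pow_eq_sum_piAntidiag]
  refine Finset.sum_congr rfl fun m hm => ?_
  rw [Finset.mem_piAntidiag] at hm
  have hs : ∑ i, m i = N := hm.1
  have h0 := Nat.multinomial_spec Finset.univ m
  rw [hs] at h0
  have h1 : (∏ i, ((m i).factorial : ℝ)) * (Nat.multinomial Finset.univ m : ℝ)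
      = (N.factorial : ℝ) := by exact_mod_cast congrArg (Nat.cast (R := ℝ)) h0
  have h2 : (Nat.multinomial Finset.univ m : ℝ)
      = (N.factorial : ℝ) / ∏ i, ((m i).factorial : ℝ) := by
    rw [eq_div_iff (prodFac_ne c m), mul_comm]; exact h1
  rw [h2]

lemma single_sum (c : ℕ) (k : Fin c) : ∑ i, Pi.single (M := fun _ => ℕ) k 1 i = 1 := by
  simp [Pi.single_apply]

lemma term_eq (c : ℕ) (q : Fin c → ℝ) (N : ℕ) (k : Fin c) (G : ℝ) (m m' : Fin c → ℕ)
    (hmk : m k = m' k + 1) (hne : ∀ i, i ≠ k → m' i = m i) :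
    (((N + 1).factorial : ℝ) / ∏ i, ((m i).factorial : ℝ)) * (∏ i, q i ^ m i)
        * ((m k : ℝ) * G)
    = ((N : ℝ) + 1) * q k *
        (((N.factorial : ℝ) / ∏ i, ((m' i).factorial : ℝ)) * (∏ i, q i ^ m' i) * G) := by
  have hef : ∏ i ∈ Finset.univ.erase k, ((m i).factorial : ℝ)
      = ∏ i ∈ Finset.univ.erase k, ((m' i).factorial : ℝ) :=
    Finset.prod_congr rfl fun i hi => by rw [hne i (Finset.ne_of_mem_erase hi)]
  have heq : ∏ i ∈ Finset.univ.erase k, q i ^ m i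
      = ∏ i ∈ Finset.univ.erase k, q i ^ m' i :=
    Finset.prod_congr rfl fun i hi => by rw [hne i (Finset.ne_of_mem_erase hi)]
  rw [← Finset.mul_prod_erase Finset.univ (fun i => ((m i).factorial : ℝ)) (Finset.mem_univ k),
    ← Finset.mul_prod_erase Finset.univ (fun i => ((m' i).factorial : ℝ)) (Finset.mem_univ k),
    ← Finset.mul_prod_erase Finset.univ (fun i => q i ^ m i) (Finset.mem_univ k),
    ← Finset.mul_prod_erase Finset.univ (fun i => q i ^ m' i) (Finset.mem_univ k),
    hef, heq, hmk, Nat.factorial_succ, Nat.factorial_succ, pow_succ]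
  have e1 : ((m' k : ℝ)) + 1 ≠ 0 := by positivity
  have e2 : ((m' k).factorial : ℝ) ≠ 0 := Nat.cast_ne_zero.2 (Nat.factorial_ne_zero _)
  have e3 : (∏ i ∈ Finset.univ.erase k, ((m' i).factorial : ℝ)) ≠ 0 :=
    Finset.prod_ne_zero_iff.2 fun i _ => Nat.cast_ne_zero.2 (Nat.factorial_ne_zero _)
  push_cast
  field_simp

lemma shift (c : ℕ) (q : Fin c → ℝ) (N : ℕ) (k : Fin c) (G : (Fin c → ℕ) → ℝ) :
    ∑ m ∈ Finset.Nat.antidiagonalTuple c (N + 1),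
      (((N + 1).factorial : ℝ) / ∏ i, ((m i).factorial : ℝ)) * (∏ i, q i ^ m i)
        * ((m k : ℝ) * G m)
    = ((N : ℝ) + 1) * q k *
      ∑ m ∈ Finset.Nat.antidiagonalTuple c N,
        ((N.factorial : ℝ) / ∏ i, ((m i).factorial : ℝ)) * (∏ i, q i ^ m i)
          * G (m + Pi.single k 1) := by
  classical
  rw [mul_sum]
  rw [← Finset.sum_filter_of_ne (s := Finset.Nat.antidiagonalTuple c (N+1))
      (p := fun m => m k ≠ 0) (f := fun m =>
        (((N + 1).factorial : ℝ) / ∏ i, ((m i).factorial : ℝ)) * (∏ i, q i ^ m i)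
        * ((m k : ℝ) * G m)) ?_]
  swap
  · intro m _ hne hk
    apply hne; simp [hk]
  refine Finset.sum_nbij' (i := fun m => fun i => m i - Pi.single (M := fun _ => ℕ) k 1 i)
    (j := fun m => m + Pi.single k 1) ?_ ?_ ?_ ?_ ?_
  · intro m hm
    simp only [Finset.mem_filter, Finset.Nat.mem_antidiagonalTuple] at hm ⊢
    obtain ⟨hsum, hk⟩ := hm
    have h1 : 1 ≤ m k := Nat.one_le_iff_ne_zero.2 hk
    have hpt : ∀ i, m i = (m i - Pi.single (M := fun _ => ℕ) k 1 i) + Pi.single (M := fun _ => ℕ) k 1 i := by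
      intro i
      by_cases h : i = k
      · subst h; simp [Nat.sub_add_cancel h1]
      · simp [Pi.single_apply, h]
    have hsum2 : ∑ i, m i = ∑ i, ((m i - Pi.single (M := fun _ => ℕ) k 1 i) + Pi.single (M := fun _ => ℕ) k 1 i) :=
      Finset.sum_congr rfl fun i _ => hpt i
    rw [Finset.sum_add_distrib, single_sum] at hsum2
    omega
  · intro m hm
    simp only [Finset.Nat.mem_antidiagonalTuple] at hm ⊢
    have : ∑ i, (m i + Pi.single (M := fun _ => ℕ) k 1 i) = N + 1 := by
      rw [Finset.sum_add_distrib, hm, single_sum]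
    refine Finset.mem_filter.2 ⟨Finset.Nat.mem_antidiagonalTuple.2 this, ?_⟩
    simp
  · intro m hm
    simp only [Finset.mem_filter, Finset.Nat.mem_antidiagonalTuple] at hm
    have h1 : 1 ≤ m k := Nat.one_le_iff_ne_zero.2 hm.2
    funext i
    by_cases h : i = k
    · subst h; simp [Nat.sub_add_cancel h1]
    · simp [Pi.single_apply, h]
  · intro m _
    funext i
    by_cases h : i = k
    · subst h; simp
    · simp [Pi.single_apply, h]
  · intro m hm
    simp only [Finset.mem_filter, Finset.Nat.mem_antidiagonalTuple] at hm
    obtain ⟨hsum, hk⟩ := hm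
    have h1 : 1 ≤ m k := Nat.one_le_iff_ne_zero.2 hk
    have hrec : ((fun i => m i - Pi.single (M := fun _ => ℕ) k 1 i) + Pi.single k 1) = m := by
      funext i
      by_cases h : i = k
      · subst h; simp [Nat.sub_add_cancel h1]
      · simp [Pi.single_apply, h]
    rw [hrec]
    refine term_eq c q N k (G m) m _ ?_ ?_
    · simp [Nat.sub_add_cancel h1]
    · intro i h; simp [Pi.single_apply, h]

lemma M1 (c : ℕ) (q : Fin c → ℝ) (N : ℕ) (k : Fin c) :
    ∑ m ∈ Finset.Nat.antidiagonalTuple c N,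
      ((N.factorial : ℝ) / ∏ i, ((m i).factorial : ℝ)) * (∏ i, q i ^ m i) * (m k : ℝ)
    = (N : ℝ) * q k * (∑ i, q i) ^ (N - 1) := by
  cases N with
  | zero =>
      rw [Finset.Nat.antidiagonalTuple_zero_right]
      simp
  | succ M =>
      have h := shift c q M k (fun _ => 1)
      simp only [mul_one] at h
      rw [h, sumW]
      push_cast
      ring_nf

lemma M2 (c : ℕ) (q : Fin c → ℝ) (N : ℕ) (k : Fin c) :
    ∑ m ∈ Finset.Nat.antidiagonalTuple c N,
      ((N.factorial : ℝ) / ∏ i, ((m i).factorial : ℝ)) * (∏ i, q i ^ m i)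
        * ((m k : ℝ) * ((m k : ℝ) - 1))
    = (N : ℝ) * ((N : ℝ) - 1) * q k ^ 2 * (∑ i, q i) ^ (N - 2) := by
  cases N with
  | zero =>
      rw [Finset.Nat.antidiagonalTuple_zero_right]
      simp
  | succ M =>
      have h := shift c q M k (fun m => (m k : ℝ) - 1)
      rw [h]
      have h2 : ∀ m : Fin c → ℕ, (((m + Pi.single k 1 : Fin c → ℕ) k : ℕ) : ℝ) - 1 = (m k : ℝ) := by
        intro m
        simp
      simp only [h2]
      have h3 :
          ∑ m ∈ Finset.Nat.antidiagonalTuple c M,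
            ((M.factorial : ℝ) / ∏ i, ((m i).factorial : ℝ)) * (∏ i, q i ^ m i) * (m k : ℝ)
          = (M : ℝ) * q k * (∑ i, q i) ^ (M - 1) := M1 c q M k
      rw [h3]
      have he : (M + 1 - 2 : ℕ) = M - 1 := by omega
      rw [he]
      push_cast
      ring

lemma Msq (c : ℕ) (q : Fin c → ℝ) (N : ℕ) :
    ∑ m ∈ Finset.Nat.antidiagonalTuple c N,
      ((N.factorial : ℝ) / ∏ i, ((m i).factorial : ℝ)) * (∏ i, q i ^ m i)
        * (∑ k, (m k : ℝ) ^ 2)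
    = (N : ℝ) * ((N : ℝ) - 1) * (∑ i, q i) ^ (N - 2) * (∑ k, q k ^ 2)
      + (N : ℝ) * (∑ i, q i) ^ (N - 1) * (∑ i, q i) := by
  have step1 :
      ∑ m ∈ Finset.Nat.antidiagonalTuple c N,
        ((N.factorial : ℝ) / ∏ i, ((m i).factorial : ℝ)) * (∏ i, q i ^ m i)
          * (∑ k, (m k : ℝ) ^ 2)
      = ∑ k : Fin c, ∑ m ∈ Finset.Nat.antidiagonalTuple c N,
          ((N.factorial : ℝ) / ∏ i, ((m i).factorial : ℝ)) * (∏ i, q i ^ m i)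
            * ((m k : ℝ) ^ 2) := by
    rw [Finset.sum_comm]
    exact Finset.sum_congr rfl fun m _ => by rw [Finset.mul_sum]
  rw [step1]
  have step2 : ∀ k : Fin c,
      ∑ m ∈ Finset.Nat.antidiagonalTuple c N,
        ((N.factorial : ℝ) / ∏ i, ((m i).factorial : ℝ)) * (∏ i, q i ^ m i)
          * ((m k : ℝ) ^ 2)
      = (N : ℝ) * ((N : ℝ) - 1) * q k ^ 2 * (∑ i, q i) ^ (N - 2)
        + (N : ℝ) * q k * (∑ i, q i) ^ (N - 1) := by
    intro k
    have split : ∀ m : Fin c → ℕ,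
        ((N.factorial : ℝ) / ∏ i, ((m i).factorial : ℝ)) * (∏ i, q i ^ m i) * ((m k : ℝ) ^ 2)
        = ((N.factorial : ℝ) / ∏ i, ((m i).factorial : ℝ)) * (∏ i, q i ^ m i)
            * ((m k : ℝ) * ((m k : ℝ) - 1))
          + ((N.factorial : ℝ) / ∏ i, ((m i).factorial : ℝ)) * (∏ i, q i ^ m i) * (m k : ℝ) := by
      intro m; ring
    rw [Finset.sum_congr rfl fun m _ => split m, Finset.sum_add_distrib, M1, M2]
  rw [Finset.sum_congr rfl fun k _ => step2 k, Finset.sum_add_distrib]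
  have hA : ∑ k, (N : ℝ) * ((N : ℝ) - 1) * q k ^ 2 * (∑ i, q i) ^ (N - 2)
      = (N : ℝ) * ((N : ℝ) - 1) * (∑ i, q i) ^ (N - 2) * (∑ k, q k ^ 2) := by
    rw [Finset.mul_sum]
    exact Finset.sum_congr rfl fun k _ => by ring
  have hB : ∑ k, (N : ℝ) * q k * (∑ i, q i) ^ (N - 1)
      = (N : ℝ) * (∑ i, q i) ^ (N - 1) * (∑ i, q i) := by
    rw [mul_comm ((N : ℝ) * (∑ i, q i) ^ (N - 1)) (∑ i, q i), Finset.sum_mul]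
    exact Finset.sum_congr rfl fun k _ => by ring
  rw [hA, hB]

lemma decomp (c : ℕ) (n : ℕ) (F : (Fin (c + 1) → ℕ) → ℝ) :
    ∑ m ∈ Finset.Nat.antidiagonalTuple (c + 1) n, F m
    = ∑ j ∈ Finset.range (n + 1), ∑ m ∈ Finset.Nat.antidiagonalTuple c (n - j),
        F (Fin.snoc m j) := by
  rw [Finset.sum_sigma']
  refine Finset.sum_nbij' (i := fun m => ⟨m (Fin.last c), Fin.init m⟩)
    (j := fun p => Fin.snoc p.2 p.1) ?_ ?_ ?_ ?_ ?_
  · intro m hm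
    rw [Finset.Nat.mem_antidiagonalTuple] at hm
    have hsplit : ∑ i, m i = (∑ k : Fin c, m k.castSucc) + m (Fin.last c) :=
      Fin.sum_univ_castSucc m
    rw [Finset.mem_sigma]
    constructor
    · rw [Finset.mem_range]
      show m (Fin.last c) < n + 1
      omega
    · rw [Finset.Nat.mem_antidiagonalTuple]
      show ∑ k : Fin c, m k.castSucc = n - m (Fin.last c)
      omega
  · intro p hp
    rw [Finset.mem_sigma, Finset.mem_range, Finset.Nat.mem_antidiagonalTuple] at hp
    rw [Finset.Nat.mem_antidiagonalTuple]
    show ∑ i, (Fin.snoc p.2 p.1 : Fin (c+1) → ℕ) i = n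
    rw [Fin.sum_univ_castSucc]
    simp only [Fin.snoc_castSucc, Fin.snoc_last]
    have h2 := hp.2
    omega
  · intro m _
    exact Fin.snoc_init_self m
  · intro p _
    simp
  · intro m _
    rw [Fin.snoc_init_self]

lemma binA (n : ℕ) (s t : ℝ) (h : s + t = 1) :
    ∑ j ∈ Finset.range n, (n.choose (j+1) : ℝ) * t ^ (n - (j+1)) * s ^ (j+1)
    = 1 - t ^ n := by
  have hb := add_pow s t n
  rw [h, one_pow] at hb
  rw [Finset.sum_range_succ'] at hb
  simp only [pow_zero, one_mul, Nat.choose_zero_right, Nat.cast_one, mul_one, Nat.sub_zero] at hb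
  have hr : ∑ j ∈ Finset.range n, (n.choose (j+1) : ℝ) * t ^ (n - (j+1)) * s ^ (j+1)
      = ∑ j ∈ Finset.range n, s ^ (j+1) * t ^ (n - (j+1)) * (n.choose (j+1) : ℝ) :=
    Finset.sum_congr rfl fun j _ => by ring
  rw [hr]
  linarith

lemma binV (n : ℕ) (hn : 1 ≤ n) (s t : ℝ) (h : s + t = 1) :
    ∑ j ∈ Finset.range n, (n.choose (j+1) : ℝ) * ((j:ℝ)+1) * t ^ (n - (j+1)) * s ^ (j+1)
    = (n : ℝ) * s := by
  obtain ⟨M, rfl⟩ : ∃ M, n = M + 1 := ⟨n - 1, by omega⟩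
  have key : ∀ j : ℕ, ((M+1).choose (j+1) : ℝ) * ((j:ℝ)+1) = ((M:ℝ)+1) * (M.choose j : ℝ) := by
    intro j
    have h0 := Nat.add_one_mul_choose_eq M j
    have h1 : (((M+1) * M.choose j : ℕ) : ℝ) = (((M+1).choose (j+1) * (j+1) : ℕ) : ℝ) := by
      exact_mod_cast congrArg (Nat.cast (R := ℝ)) h0
    push_cast at h1
    linarith
  have hb := add_pow s t M
  rw [h, one_pow] at hb
  calc ∑ j ∈ Finset.range (M+1), ((M+1).choose (j+1) : ℝ) * ((j:ℝ)+1) * t ^ (M+1 - (j+1)) * s ^ (j+1)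
      = ∑ j ∈ Finset.range (M+1), ((M:ℝ)+1) * s * (s ^ j * t ^ (M - j) * (M.choose j : ℝ)) := by
        refine Finset.sum_congr rfl fun j _ => ?_
        rw [key j, show M + 1 - (j+1) = M - j from Nat.succ_sub_succ M j, pow_succ]
        ring
    _ = ((M:ℝ)+1) * s * ∑ j ∈ Finset.range (M+1), s ^ j * t ^ (M - j) * (M.choose j : ℝ) := by
        rw [Finset.mul_sum]
    _ = ((M:ℝ)+1) * s := by rw [← hb, mul_one]
    _ = ((M+1 : ℕ) : ℝ) * s := by push_cast; ring

lemma binT (n : ℕ) (hn : 1 ≤ n) (s t : ℝ) (h : s + t = 1) (hs : s ≠ 0) :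
    ∑ j ∈ Finset.range n, (n.choose (j+1) : ℝ) * t ^ (n - (j+1)) * (j:ℝ) * s ^ (j-1)
    = ((n:ℝ) * s - 1 + t ^ n) / s ^ 2 := by
  rw [eq_div_iff (pow_ne_zero 2 hs), Finset.sum_mul]
  have per : ∀ j ∈ Finset.range n,
      (n.choose (j+1) : ℝ) * t ^ (n - (j+1)) * (j:ℝ) * s ^ (j-1) * s ^ 2
      = (n.choose (j+1) : ℝ) * ((j:ℝ)+1) * t ^ (n - (j+1)) * s ^ (j+1)
        - (n.choose (j+1) : ℝ) * t ^ (n - (j+1)) * s ^ (j+1) := by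
    intro j _
    have hp : (j:ℝ) * (s ^ (j-1) * s ^ 2) = (j:ℝ) * s ^ (j+1) := by
      cases j with
      | zero => simp
      | succ i =>
          rw [show i + 1 - 1 = i from rfl, ← pow_add]
    have e1 : (n.choose (j+1) : ℝ) * t ^ (n - (j+1)) * (j:ℝ) * s ^ (j-1) * s ^ 2
        = (n.choose (j+1) : ℝ) * t ^ (n - (j+1)) * ((j:ℝ) * (s ^ (j-1) * s ^ 2)) := by ring
    rw [e1, hp]
    ring
  rw [Finset.sum_congr rfl per, Finset.sum_sub_distrib, binV n hn s t h, binA n s t h]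
  ring

lemma outer (n : ℕ) (hn : 1 ≤ n) (qcs S : ℝ) (hlt : qcs < 1) :
    ∑ j ∈ Finset.range (n+1), (n.choose j : ℝ) * qcs ^ j *
      ((1 - qcs) ^ (n - j)
        - ((if j < n then (1:ℝ) else 0) / ((n:ℝ) * ((n:ℝ) - (j:ℝ)))) *
          (((n - j : ℕ) : ℝ) * (((n - j : ℕ) : ℝ) - 1) * (1 - qcs) ^ (n - j - 2) * S
            + ((n - j : ℕ) : ℝ) * (1 - qcs) ^ (n - j - 1) * (1 - qcs)))
    = (1 - (1 - qcs ^ n) / n) - (1 / (1 - qcs) - (1 - qcs ^ n) / (n * (1 - qcs) ^ 2)) * S := by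
  have hs0 : (1 - qcs) ≠ 0 := ne_of_gt (by linarith)
  have hn0 : (n : ℝ) ≠ 0 := Nat.cast_ne_zero.2 (by omega)
  have hsum' : (1 - qcs) + qcs = 1 := by ring
  have hlast : (n.choose n : ℝ) * qcs ^ n *
      ((1 - qcs) ^ (n - n)
        - ((if n < n then (1:ℝ) else 0) / ((n:ℝ) * ((n:ℝ) - (n:ℝ)))) *
          (((n - n : ℕ) : ℝ) * (((n - n : ℕ) : ℝ) - 1) * (1 - qcs) ^ (n - n - 2) * S
            + ((n - n : ℕ) : ℝ) * (1 - qcs) ^ (n - n - 1) * (1 - qcs))) = qcs ^ n := by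
    rw [if_neg (lt_irrefl n), Nat.sub_self, Nat.choose_self]
    norm_num
  rw [Finset.sum_range_succ, hlast]
  have hmain : ∀ j ∈ Finset.range n,
      (n.choose j : ℝ) * qcs ^ j *
      ((1 - qcs) ^ (n - j)
        - ((if j < n then (1:ℝ) else 0) / ((n:ℝ) * ((n:ℝ) - (j:ℝ)))) *
          (((n - j : ℕ) : ℝ) * (((n - j : ℕ) : ℝ) - 1) * (1 - qcs) ^ (n - j - 2) * S
            + ((n - j : ℕ) : ℝ) * (1 - qcs) ^ (n - j - 1) * (1 - qcs)))
      = (1 - 1/(n:ℝ)) * ((n.choose j : ℝ) * qcs ^ j * (1 - qcs) ^ (n - j))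
        - (S / (n:ℝ)) * ((n.choose j : ℝ) * qcs ^ j * (((n - j : ℕ) : ℝ) - 1)
            * (1 - qcs) ^ (n - j - 2)) := by
    intro j hj
    rw [Finset.mem_range] at hj
    have hcast : (n:ℝ) - (j:ℝ) = ((n - j : ℕ) : ℝ) := (Nat.cast_sub hj.le).symm
    have hN0 : ((n - j : ℕ) : ℝ) ≠ 0 := Nat.cast_ne_zero.2 (by omega)
    have hpow : (1 - qcs) ^ (n - j - 1) * (1 - qcs) = (1 - qcs) ^ (n - j) := by
      rw [← pow_succ]
      congr 1
      omega
    rw [if_pos hj, hcast, mul_assoc ((n - j : ℕ) : ℝ) ((1 - qcs) ^ (n - j - 1)) (1 - qcs), hpow]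
    field_simp
    ring
  rw [Finset.sum_congr rfl hmain, Finset.sum_sub_distrib, ← Finset.mul_sum, ← Finset.mul_sum]
  have hA : ∑ j ∈ Finset.range n, (n.choose j : ℝ) * qcs ^ j * (1 - qcs) ^ (n - j)
      = 1 - qcs ^ n := by
    rw [← binA n (1 - qcs) qcs hsum',
      ← Finset.sum_range_reflect (fun j => (n.choose j : ℝ) * qcs ^ j * (1 - qcs) ^ (n - j)) n]
    refine Finset.sum_congr rfl fun j hj => ?_
    rw [Finset.mem_range] at hj
    have e2 : n - (n - 1 - j) = j + 1 := by omega
    have e1 : n - 1 - j = n - (j+1) := by omega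
    rw [e2, e1, Nat.choose_symm (by omega : j + 1 ≤ n)]
  have hT : ∑ j ∈ Finset.range n, (n.choose j : ℝ) * qcs ^ j * (((n - j : ℕ) : ℝ) - 1)
        * (1 - qcs) ^ (n - j - 2)
      = ((n:ℝ) * (1 - qcs) - 1 + qcs ^ n) / (1 - qcs) ^ 2 := by
    rw [← binT n hn (1 - qcs) qcs hsum' hs0,
      ← Finset.sum_range_reflect (fun j => (n.choose j : ℝ) * qcs ^ j * (((n - j : ℕ) : ℝ) - 1)
          * (1 - qcs) ^ (n - j - 2)) n]
    refine Finset.sum_congr rfl fun j hj => ?_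
    rw [Finset.mem_range] at hj
    have e2 : n - (n - 1 - j) = j + 1 := by omega
    have e1 : n - 1 - j = n - (j+1) := by omega
    have e3 : j + 1 - 2 = j - 1 := by omega
    rw [e2, e1, Nat.choose_symm (by omega : j + 1 ≤ n), e3]
    push_cast
    ring
  rw [hA, hT]
  field_simp
  ring

lemma plug_snoc (C n j : ℕ) (m : Fin C → ℕ) :
    plugInAmb C n (Fin.snoc m j)
    = 1 - ((if j < n then (1:ℝ) else 0) / ((n:ℝ) * ((n:ℝ) - (j:ℝ)))) *
        ∑ k : Fin C, (m k : ℝ) ^ 2 := by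
  unfold plugInAmb
  simp only [Fin.snoc_last, Fin.snoc_castSucc]

lemma pmf_snoc (C n : ℕ) (q : Fin C → ℝ) (qcs : ℝ) (j : ℕ) (hj : j ≤ n) (m : Fin C → ℕ) :
    multinomialPMF C n (Fin.snoc q qcs) (Fin.snoc m j)
    = (n.choose j : ℝ) * qcs ^ j *
        ((((n - j).factorial : ℝ) / ∏ i, ((m i).factorial : ℝ)) * ∏ i, q i ^ m i) := by
  unfold multinomialPMF
  rw [Fin.prod_univ_castSucc (fun i => (((Fin.snoc m j : Fin (C+1) → ℕ) i).factorial : ℝ)),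
    Fin.prod_univ_castSucc (fun i => (Fin.snoc q qcs : Fin (C+1) → ℝ) i ^ (Fin.snoc m j : Fin (C+1) → ℕ) i)]
  simp only [Fin.snoc_last, Fin.snoc_castSucc]
  rw [Nat.cast_choose ℝ hj]
  have h1 := prodFac_ne C m
  have h2 : ((j.factorial : ℝ)) ≠ 0 := Nat.cast_ne_zero.2 (Nat.factorial_ne_zero _)
  have h3 : (((n-j).factorial : ℝ)) ≠ 0 := Nat.cast_ne_zero.2 (Nat.factorial_ne_zero _)
  field_simp

/-- The multinomial expectation of the plug-in ambiguity estimator equals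
`(1 - (1 - q_cs^n)/n) - [1/(1-q_cs) - (1 - q_cs^n)/(n(1-q_cs)²)]·∑ q_k²`. -/
theorem expected_plugin_ambiguity
    (C : ℕ) (hC : 1 ≤ C) (n : ℕ) (hn : 1 ≤ n)
    (q : Fin C → ℝ) (qcs : ℝ)
    (hq : ∀ k, 0 ≤ q k) (hqcs : 0 ≤ qcs)
    (hsum : (∑ k, q k) + qcs = 1) (hlt : qcs < 1) :
    ∑ m ∈ Finset.Nat.antidiagonalTuple (C + 1) n,
        multinomialPMF C n (Fin.snoc q qcs) m * plugInAmb C n m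
      = (1 - (1 - qcs ^ n) / n) -
        (1 / (1 - qcs) - (1 - qcs ^ n) / (n * (1 - qcs) ^ 2)) * ∑ k, (q k) ^ 2 := by
  have hs : (∑ i, q i) = 1 - qcs := by linarith
  rw [decomp C n (fun m => multinomialPMF C n (Fin.snoc q qcs) m * plugInAmb C n m)]
  have inner : ∀ j ∈ Finset.range (n+1),
      ∑ m ∈ Finset.Nat.antidiagonalTuple C (n - j),
        multinomialPMF C n (Fin.snoc q qcs) (Fin.snoc m j)
          * plugInAmb C n (Fin.snoc m j)
      = (n.choose j : ℝ) * qcs ^ j *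
          ((1 - qcs) ^ (n - j)
            - ((if j < n then (1:ℝ) else 0) / ((n:ℝ) * ((n:ℝ) - (j:ℝ)))) *
              (((n - j : ℕ) : ℝ) * (((n - j : ℕ) : ℝ) - 1) * (1 - qcs) ^ (n - j - 2)
                  * (∑ k, (q k) ^ 2)
                + ((n - j : ℕ) : ℝ) * (1 - qcs) ^ (n - j - 1) * (1 - qcs))) := by
    intro j hjr
    rw [Finset.mem_range] at hjr
    have hj : j ≤ n := by omega
    have hterm : ∀ m : Fin C → ℕ,
        multinomialPMF C n (Fin.snoc q qcs) (Fin.snoc m j) * plugInAmb C n (Fin.snoc m j)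
        = ((n.choose j : ℝ) * qcs ^ j) *
            ((((n - j).factorial : ℝ) / ∏ i, ((m i).factorial : ℝ)) * ∏ i, q i ^ m i)
          - ((n.choose j : ℝ) * qcs ^ j
                * ((if j < n then (1:ℝ) else 0) / ((n:ℝ) * ((n:ℝ) - (j:ℝ))))) *
            ((((n - j).factorial : ℝ) / ∏ i, ((m i).factorial : ℝ)) * (∏ i, q i ^ m i)
              * (∑ k, (m k : ℝ) ^ 2)) := by
      intro m
      rw [pmf_snoc C n q qcs j hj m, plug_snoc]
      ring
    rw [Finset.sum_congr rfl fun m _ => hterm m, Finset.sum_sub_distrib,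
      ← Finset.mul_sum, ← Finset.mul_sum, sumW, Msq, hs]
    ring
  rw [Finset.sum_congr rfl inner]
  exact outer n hn qcs (∑ k, (q k) ^ 2) hlt
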